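/- Under Assumptions 1 and 2, the randomized incremental subgradient iterate x_{k+1} = P_X(x_k - v_k g_{k,ω_k}), where ω_k is uniform on I_k = {i : f_i(x_k) > f_i*} and g_{k,ω_k} is a unit quasi-subgradient of f_{ω_k} at x_k, satisfies for every common minimizer x*: E[‖x_{k+1} - x*‖² | F_k] ≤ ‖x_k - x*‖² - 2 v_k (R_{p,m}/m) (f(x_k) - f*)^{1/p} + v_k², where R_{p,m} = L_max^{-1/p} min{1, m^{1-1/p}} and F_k = σ(x_0,...,x_k). -/

import Mathlib

open Finset

private lemma aux_rpow_add_le {x y q : ℝ} (hx : 0 ≤ x) (hy : 0 ≤ y) (hq : 0 ≤ q)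
    (hq1 : q ≤ 1) : (x + y) ^ q ≤ x ^ q + y ^ q := by
  lift x to NNReal using hx
  lift y to NNReal using hy
  exact_mod_cast NNReal.rpow_add_le_add_rpow x y hq hq1

private lemma aux_sum_rpow {ι : Type*} {s : Finset ι} {d : ι → ℝ} {q : ℝ}
    (hq : 0 < q) (hq1 : q ≤ 1) (hd : ∀ i ∈ s, 0 ≤ d i) :
    (∑ i ∈ s, d i) ^ q ≤ ∑ i ∈ s, d i ^ q := by
  classical
  induction s using Finset.cons_induction with
  | empty => simp [Real.zero_rpow hq.ne']
  | cons a s ha ih =>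
    rw [Finset.sum_cons, Finset.sum_cons]
    have h1 : 0 ≤ d a := hd a (Finset.mem_cons_self a s)
    have h2 : ∀ i ∈ s, 0 ≤ d i := fun i hi => hd i (Finset.mem_cons_of_mem hi)
    calc (d a + ∑ i ∈ s, d i) ^ q ≤ d a ^ q + (∑ i ∈ s, d i) ^ q :=
          aux_rpow_add_le h1 (Finset.sum_nonneg h2) hq.le hq1
      _ ≤ d a ^ q + ∑ i ∈ s, d i ^ q := add_le_add_right (ih h2) _

set_option maxHeartbeats 1000000 in
/-- Basic inequality in conditional expectation for the randomized incremental
subgradient method (Lemma 3.8): the uniform average over the active index set `I`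
of the squared distances of the candidate next iterates is the conditional
expectation `E[‖x_{k+1} - x*‖² | F_k]`. -/
theorem stmt15 {n m : ℕ} (hm : 0 < m)
    (f : Fin m → EuclideanSpace ℝ (Fin n) → ℝ)
    (X : Set (EuclideanSpace ℝ (Fin n))) (hXne : X.Nonempty)
    (hXc : IsClosed X) (hXconv : Convex ℝ X)
    (hqc : ∀ i, QuasiconvexOn ℝ Set.univ (f i)) (hcont : ∀ i, Continuous (f i))
    (p Lmax : ℝ) (hp : 0 < p) (hL : 0 < Lmax)
    (hHolder : ∀ i, ∀ x ∈ X, ∀ y, |f i y - f i x| ≤ Lmax * ‖y - x‖ ^ p)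
    (xstar : EuclideanSpace ℝ (Fin n)) (hxsX : xstar ∈ X)
    (hmin : ∀ i, ∀ y ∈ X, f i xstar ≤ f i y)
    (xk : EuclideanSpace ℝ (Fin n)) (hxk : xk ∈ X)
    (v : ℝ) (hv : 0 < v)
    (I : Finset (Fin m))
    (hIdef : I = Finset.univ.filter fun i => f i xstar < f i xk)
    (hIne : I.Nonempty)
    (g : Fin m → EuclideanSpace ℝ (Fin n)) (hg : ∀ i ∈ I, ‖g i‖ = 1)
    (hgsub : ∀ i ∈ I, ∀ y, f i y < f i xk → (inner ℝ (g i) (y - xk) : ℝ) ≤ 0)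
    (next : Fin m → EuclideanSpace ℝ (Fin n))
    (hnext : ∀ i ∈ I, next i ∈ X ∧
      ∀ w ∈ X, ‖next i - (xk - v • g i)‖ ≤ ‖w - (xk - v • g i)‖) :
    (1 / (I.card : ℝ)) * ∑ i ∈ I, ‖next i - xstar‖ ^ 2 ≤
      ‖xk - xstar‖ ^ 2
        - 2 * v * ((Lmax ^ (-(1 / p)) * min 1 ((m : ℝ) ^ (1 - 1 / p))) / (m : ℝ))
            * ((∑ i, f i xk) - ∑ i, f i xstar) ^ (1 / p)
        + v ^ 2 := by
  classical
  set q : ℝ := 1 / p with hqdef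
  have hq0 : 0 < q := by positivity
  set e : Fin m → ℝ := fun i => inner ℝ (g i) (xk - xstar) with hedef
  set d : Fin m → ℝ := fun i => f i xk - f i xstar with hddef
  have hfI : ∀ i ∈ I, f i xstar < f i xk := by
    intro i hi; rw [hIdef] at hi; exact (Finset.mem_filter.mp hi).2
  have hd0 : ∀ i, 0 ≤ d i := fun i => sub_nonneg.mpr (hmin i xk hxk)
  have hgg : ∀ i ∈ I, (inner ℝ (g i) (g i) : ℝ) = 1 := by
    intro i hi
    rw [real_inner_self_eq_norm_sq, hg i hi]; norm_num
  have heI : ∀ i ∈ I, 0 ≤ e i := by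
    intro i hi
    have h := hgsub i hi xstar (hfI i hi)
    have h2 : (inner ℝ (g i) (xstar - xk) : ℝ) = - e i := by
      simp only [hedef, inner_sub_right]; ring
    rw [h2] at h; linarith
  -- key quantitative quasi-subgradient inequality
  have hkey : ∀ i ∈ I, d i ≤ Lmax * e i ^ q⁻¹ := by
    intro i hi
    have hbound : ∀ δ : ℝ, δ ∈ Set.Ioi (0:ℝ) → d i ≤ Lmax * (e i + δ) ^ q⁻¹ := by
      intro δ hδ
      rw [Set.mem_Ioi] at hδ
      set y := xstar + (e i + δ) • g i with hy
      have hip : (inner ℝ (g i) (y - xk) : ℝ) = δ := by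
        have h1 : y - xk = (xstar - xk) + (e i + δ) • g i := by rw [hy]; abel
        rw [h1, inner_add_right, real_inner_smul_right, hgg i hi]
        have h2 : (inner ℝ (g i) (xstar - xk) : ℝ) = - e i := by
          simp only [hedef, inner_sub_right]; ring
        rw [h2]; ring
      have hfy : f i xk ≤ f i y := by
        by_contra hlt
        push_neg at hlt
        have := hgsub i hi y hlt
        rw [hip] at this; linarith
      have hnorm : ‖y - xstar‖ = e i + δ := by
        have h3 : y - xstar = (e i + δ) • g i := by rw [hy]; abel
        rw [h3, norm_smul, hg i hi, Real.norm_eq_abs,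
          abs_of_pos (by linarith [heI i hi]), mul_one]
      have hH := hHolder i xstar hxsX y
      have hq' : q⁻¹ = p := by rw [hqdef]; field_simp
      calc d i = f i xk - f i xstar := rfl
        _ ≤ f i y - f i xstar := by linarith
        _ ≤ |f i y - f i xstar| := le_abs_self _
        _ ≤ Lmax * ‖y - xstar‖ ^ p := hH
        _ = Lmax * (e i + δ) ^ q⁻¹ := by rw [hnorm, hq']
    have hT : Filter.Tendsto (fun δ : ℝ => Lmax * (e i + δ) ^ q⁻¹)
        (nhdsWithin 0 (Set.Ioi 0)) (nhds (Lmax * e i ^ q⁻¹)) := by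
      have h1 : Filter.Tendsto (fun δ : ℝ => e i + δ) (nhdsWithin 0 (Set.Ioi 0))
          (nhds (e i)) := by
        have h0 : Filter.Tendsto (fun δ : ℝ => e i + δ) (nhds 0) (nhds (e i + 0)) :=
          (continuous_const.add continuous_id).tendsto 0
        rw [add_zero] at h0
        exact h0.mono_left nhdsWithin_le_nhds
      have h2 : ContinuousAt (fun x : ℝ => Lmax * x ^ q⁻¹) (e i) :=
        continuousAt_const.mul
          (Real.continuousAt_rpow_const _ _ (Or.inr (by positivity)))
      exact h2.tendsto.comp h1
    exact ge_of_tendsto hT (eventually_nhdsWithin_of_forall hbound)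
  have hkey2 : ∀ i ∈ I, (d i / Lmax) ^ q ≤ e i := by
    intro i hi
    have h1 : d i / Lmax ≤ e i ^ q⁻¹ := (div_le_iff₀ hL).mpr
      (by rw [mul_comm]; exact hkey i hi)
    have h2 : (d i / Lmax) ^ q ≤ (e i ^ q⁻¹) ^ q :=
      Real.rpow_le_rpow (div_nonneg (hd0 i) hL.le) h1 hq0.le
    rwa [← Real.rpow_mul (heI i hi), inv_mul_cancel₀ hq0.ne', Real.rpow_one] at h2
  -- projection inequality
  have hproj : ∀ i ∈ I, ‖next i - xstar‖ ^ 2 ≤ ‖xk - xstar‖ ^ 2 - 2 * v * e i + v ^ 2 := by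
    intro i hi
    obtain ⟨hnX, hmin'⟩ := hnext i hi
    set z := xk - v • g i with hz
    haveI : Nonempty X := ⟨⟨next i, hnX⟩⟩
    have hbdd : BddBelow (Set.range fun w : X => ‖z - (w : EuclideanSpace ℝ (Fin n))‖) :=
      ⟨0, by rintro _ ⟨w, rfl⟩; exact norm_nonneg _⟩
    have hle : ∀ w : X, ‖z - next i‖ ≤ ‖z - (w : EuclideanSpace ℝ (Fin n))‖ := by
      intro w
      rw [norm_sub_rev z (next i), norm_sub_rev z (w : EuclideanSpace ℝ (Fin n))]
      exact hmin' w w.2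
    have hinf : ‖z - next i‖ = ⨅ w : X, ‖z - w‖ :=
      le_antisymm (le_ciInf hle) (ciInf_le hbdd ⟨next i, hnX⟩)
    have hobt := (norm_eq_iInf_iff_real_inner_le_zero hXconv hnX).mp hinf xstar hxsX
    have hmid : (0:ℝ) ≤ inner ℝ (z - next i) (next i - xstar) := by
      have h4 : (inner ℝ (z - next i) (next i - xstar) : ℝ)
          = - inner ℝ (z - next i) (xstar - next i) := by
        rw [← inner_neg_right]; congr 1; abel
      rw [h4]; linarith
    have hexp : ‖z - xstar‖ ^ 2 = ‖z - next i‖ ^ 2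
        + 2 * inner ℝ (z - next i) (next i - xstar) + ‖next i - xstar‖ ^ 2 := by
      have h5 : z - xstar = (z - next i) + (next i - xstar) := by abel
      rw [h5, norm_add_sq_real]
    have h6 : ‖next i - xstar‖ ^ 2 ≤ ‖z - xstar‖ ^ 2 := by
      nlinarith [sq_nonneg ‖z - next i‖]
    have h7 : ‖z - xstar‖ ^ 2 = ‖xk - xstar‖ ^ 2 - 2 * v * e i + v ^ 2 := by
      have h8 : z - xstar = (xk - xstar) - v • g i := by rw [hz]; abel
      have h9 : (inner ℝ (xk - xstar) (v • g i) : ℝ) = v * e i := by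
        rw [real_inner_smul_right, real_inner_comm]
      have h10 : ‖v • g i‖ = v := by
        rw [norm_smul, hg i hi, Real.norm_eq_abs, abs_of_pos hv, mul_one]
      rw [h8, @norm_sub_sq_real, h9, h10]; ring
    linarith
  -- index set facts
  have hk0 : (0:ℝ) < I.card := by exact_mod_cast Finset.card_pos.mpr hIne
  have hkm : (I.card : ℝ) ≤ m := by
    have h : I.card ≤ m := by simpa using Finset.card_le_univ I
    exact_mod_cast h
  have hm0 : (0:ℝ) < m := by exact_mod_cast hm
  -- f(xk) - f* equals sum over I
  have hFD : ((∑ i, f i xk) - ∑ i, f i xstar) = ∑ i ∈ I, d i := by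
    rw [← Finset.sum_sub_distrib]
    exact (Finset.sum_subset (Finset.subset_univ I) (fun x _ hx => by
      have h1 : ¬ f x xstar < f x xk := by
        rw [hIdef] at hx; simpa using hx
      have h2 := hmin x xk hxk
      show f x xk - f x xstar = 0
      linarith)).symm
  set D : ℝ := ∑ i ∈ I, d i with hD
  have hD0 : 0 ≤ D := Finset.sum_nonneg fun i _ => hd0 i
  set Sq : ℝ := ∑ i ∈ I, d i ^ q with hSqdef
  have hDq0 : 0 ≤ D ^ q := Real.rpow_nonneg hD0 _
  have hLq : (0:ℝ) < Lmax ^ (-q) := Real.rpow_pos_of_pos hL _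
  have hE : Lmax ^ (-q) * Sq ≤ ∑ i ∈ I, e i := by
    have hterm : ∀ i ∈ I, (d i / Lmax) ^ q = Lmax ^ (-q) * d i ^ q := by
      intro i hi
      rw [Real.div_rpow (hd0 i) hL.le, Real.rpow_neg hL.le, div_eq_mul_inv, mul_comm]
    calc Lmax ^ (-q) * Sq = ∑ i ∈ I, (d i / Lmax) ^ q := by
          rw [hSqdef, Finset.mul_sum]; exact (Finset.sum_congr rfl hterm).symm
      _ ≤ ∑ i ∈ I, e i := Finset.sum_le_sum hkey2
  -- the central bound
  have hKey : (I.card : ℝ) * ((Lmax ^ (-q) * min 1 ((m:ℝ) ^ (1 - q))) / m) * D ^ q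
      ≤ ∑ i ∈ I, e i := by
    have hmn0 : 0 ≤ min 1 ((m:ℝ) ^ (1 - q)) :=
      le_min zero_le_one (Real.rpow_nonneg hm0.le _)
    rcases le_total p 1 with hp1 | hp1
    · -- p ≤ 1, q ≥ 1 : Jensen
      have hq1 : 1 ≤ q := by rw [hqdef, le_div_iff₀ hp, one_mul]; exact hp1
      have hJ := Real.rpow_arith_mean_le_arith_mean_rpow I
        (fun _ => ((I.card : ℝ))⁻¹) d (fun i _ => by positivity)
        (by rw [Finset.sum_const, nsmul_eq_mul, mul_inv_cancel₀ hk0.ne'])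
        (fun i _ => hd0 i) hq1
      rw [← Finset.mul_sum, ← hD, Real.mul_rpow (by positivity) hD0,
        Real.inv_rpow hk0.le, ← Finset.mul_sum, ← hSqdef] at hJ
      have hSq : (I.card : ℝ) * ((I.card : ℝ) ^ q)⁻¹ * D ^ q ≤ Sq := by
        calc (I.card : ℝ) * ((I.card : ℝ) ^ q)⁻¹ * D ^ q
            = (I.card : ℝ) * (((I.card : ℝ) ^ q)⁻¹ * D ^ q) := by ring
          _ ≤ (I.card : ℝ) * (((I.card : ℝ))⁻¹ * Sq) :=
              mul_le_mul_of_nonneg_left hJ hk0.le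
          _ = Sq := by field_simp
      have h1 : ((m:ℝ) ^ (1 - q)) / m = ((m:ℝ) ^ q)⁻¹ := by
        rw [Real.rpow_sub hm0, Real.rpow_one]
        rw [div_div, mul_comm, ← div_div, div_self hm0.ne', one_div]
      have hkq : ((m:ℝ) ^ q)⁻¹ ≤ ((I.card : ℝ) ^ q)⁻¹ := by
        have h2 : (I.card : ℝ) ^ q ≤ (m:ℝ) ^ q :=
          Real.rpow_le_rpow hk0.le hkm hq0.le
        have h3 : (0:ℝ) < (I.card : ℝ) ^ q := Real.rpow_pos_of_pos hk0 _
        exact inv_anti₀ h3 h2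
      calc (I.card : ℝ) * ((Lmax ^ (-q) * min 1 ((m:ℝ) ^ (1 - q))) / m) * D ^ q
          ≤ (I.card : ℝ) * ((Lmax ^ (-q) * ((m:ℝ) ^ (1 - q))) / m) * D ^ q := by
            apply mul_le_mul_of_nonneg_right _ hDq0
            apply mul_le_mul_of_nonneg_left _ hk0.le
            apply div_le_div_of_nonneg_right (c := (m:ℝ))
              (mul_le_mul_of_nonneg_left (min_le_right _ _) hLq.le) hm0.le
        _ = Lmax ^ (-q) * ((I.card : ℝ) * ((m:ℝ) ^ q)⁻¹ * D ^ q) := by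
            rw [mul_div_assoc, h1]; ring
        _ ≤ Lmax ^ (-q) * ((I.card : ℝ) * ((I.card : ℝ) ^ q)⁻¹ * D ^ q) := by
            apply mul_le_mul_of_nonneg_left _ hLq.le
            apply mul_le_mul_of_nonneg_right _ hDq0
            exact mul_le_mul_of_nonneg_left hkq hk0.le
        _ ≤ Lmax ^ (-q) * Sq := mul_le_mul_of_nonneg_left hSq hLq.le
        _ ≤ ∑ i ∈ I, e i := hE
    · -- 1 ≤ p, q ≤ 1 : subadditivity
      have hq1 : q ≤ 1 := by rw [hqdef, div_le_one hp]; exact hp1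
      have hsub : D ^ q ≤ Sq := aux_sum_rpow hq0 hq1 (fun i _ => hd0 i)
      calc (I.card : ℝ) * ((Lmax ^ (-q) * min 1 ((m:ℝ) ^ (1 - q))) / m) * D ^ q
          = ((I.card : ℝ) / m * min 1 ((m:ℝ) ^ (1 - q))) * (Lmax ^ (-q) * D ^ q) := by
            ring
        _ ≤ 1 * (Lmax ^ (-q) * D ^ q) := by
            apply mul_le_mul_of_nonneg_right _ (mul_nonneg hLq.le hDq0)
            have h1 : (I.card : ℝ) / m ≤ 1 := by
              rw [div_le_one hm0]; exact hkm
            have h2 : min 1 ((m:ℝ) ^ (1 - q)) ≤ 1 := min_le_left _ _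
            calc (I.card : ℝ) / m * min 1 ((m:ℝ) ^ (1 - q))
                ≤ 1 * min 1 ((m:ℝ) ^ (1 - q)) :=
                  mul_le_mul_of_nonneg_right h1 hmn0
              _ ≤ 1 := by rw [one_mul]; exact h2
        _ = Lmax ^ (-q) * D ^ q := one_mul _
        _ ≤ Lmax ^ (-q) * Sq := mul_le_mul_of_nonneg_left hsub hLq.le
        _ ≤ ∑ i ∈ I, e i := hE
  -- summation and conclusion
  have hsum : ∑ i ∈ I, ‖next i - xstar‖ ^ 2
      ≤ (I.card : ℝ) * (‖xk - xstar‖ ^ 2 + v ^ 2) - 2 * v * ∑ i ∈ I, e i := by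
    calc ∑ i ∈ I, ‖next i - xstar‖ ^ 2
        ≤ ∑ i ∈ I, (‖xk - xstar‖ ^ 2 - 2 * v * e i + v ^ 2) := Finset.sum_le_sum hproj
      _ = (I.card : ℝ) * (‖xk - xstar‖ ^ 2 + v ^ 2) - 2 * v * ∑ i ∈ I, e i := by
          rw [Finset.sum_add_distrib, Finset.sum_sub_distrib, ← Finset.mul_sum,
            Finset.sum_const, Finset.sum_const, nsmul_eq_mul, nsmul_eq_mul]
          ring
  rw [hFD, one_div, inv_mul_le_iff₀ hk0]
  have h2v : (0:ℝ) < 2 * v := by linarith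
  nlinarith [mul_le_mul_of_nonneg_left hKey h2v.le]
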